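/- Let s ≥ 1 be a real number, let 0 < p ≤ 4/s, and let w be a complex number with |w| < 1. Then (1/2π) ∫₀^{2π} |1 − w̄ e^{iθ}|^{−p} dθ ≤ (1 − |w|²)^{−p/s}. (Equivalently, ‖k_w‖_p ≤ (1−|w|²)^{−1/s} for the Szegő/Cauchy kernel k_w(z) = (1 − w̄ z)^{−1}, which is the L^q-norm of the extremal kernel whose Riesz projection is k_w, with s = q* the conjugate exponent.) -/

import Mathlib

open MeasureTheory Real Complex Filter
open scoped ENNReal NNReal

noncomputable section

namespace SzegoAux

/-- Coefficients of the binomial series `(1-x)^{-t} = ∑ bc t n • x^n`. -/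
def bc (t : ℝ) (n : ℕ) : ℝ := ∏ k ∈ Finset.range n, ((t + k) / (k + 1))

lemma bc_zero (t : ℝ) : bc t 0 = 1 := by simp [bc]

lemma bc_succ (t : ℝ) (n : ℕ) : bc t (n + 1) = bc t n * ((t + n) / (n + 1)) := by
  simp only [bc, Finset.prod_range_succ]

lemma bc_pos {t : ℝ} (ht : 0 < t) (n : ℕ) : 0 < bc t n := by
  apply Finset.prod_pos
  intro k _
  have hk : (0:ℝ) ≤ (k:ℝ) := Nat.cast_nonneg k
  positivity

lemma bc_rec (t : ℝ) (n : ℕ) : ((n:ℝ) + 1) * bc t (n + 1) = (t + n) * bc t n := by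
  rw [bc_succ]
  have h : ((n:ℝ) + 1) ≠ 0 := by positivity
  field_simp

lemma ratio_eventually (t ρ : ℝ) (ht : 0 < t) (h0 : 0 ≤ ρ) (h1 : ρ < 1) :
    ∀ᶠ n : ℕ in atTop, ρ * (t + n) ≤ (1 + ρ) / 2 * n := by
  have h2 : 0 < 1 - ρ := by linarith
  filter_upwards [eventually_ge_atTop ⌈2 * t / (1 - ρ)⌉₊] with n hn
  have h3 : 2 * t / (1 - ρ) ≤ (n:ℝ) := le_trans (Nat.le_ceil _) (by exact_mod_cast hn)
  have h4 : 2 * t ≤ (n:ℝ) * (1 - ρ) := by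
    rw [div_le_iff₀ h2] at h3; linarith
  nlinarith [mul_nonneg h2.le ht.le]

lemma summable_bc {t : ℝ} (ht : 0 < t) {ρ : ℝ} (h0 : 0 ≤ ρ) (h1 : ρ < 1) :
    Summable (fun n : ℕ => bc t n * ρ ^ n) := by
  apply summable_of_ratio_norm_eventually_le (r := (1 + ρ) / 2) (by linarith)
  filter_upwards [ratio_eventually t ρ ht h0 h1] with n hn
  have hb := bc_pos ht n
  have hb1 := bc_pos ht (n + 1)
  have hρn : (0:ℝ) ≤ ρ ^ n := pow_nonneg h0 n
  rw [Real.norm_of_nonneg (by positivity), Real.norm_of_nonneg (by positivity)]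
  have key : ρ * (t + n) / (n + 1) ≤ (1 + ρ) / 2 := by
    rw [div_le_iff₀ (by positivity)]
    have : (1 + ρ) / 2 * n ≤ (1 + ρ) / 2 * (n + 1) := by nlinarith
    linarith
  calc bc t (n + 1) * ρ ^ (n + 1)
      = (bc t n * ρ ^ n) * (ρ * (t + n) / (n + 1)) := by rw [bc_succ, pow_succ]; ring
    _ ≤ (bc t n * ρ ^ n) * ((1 + ρ) / 2) := by
        apply mul_le_mul_of_nonneg_left key (by positivity)
    _ = (1 + ρ) / 2 * (bc t n * ρ ^ n) := by ring

lemma summable_bc_deriv {t : ℝ} (ht : 0 < t) {ρ : ℝ} (h0 : 0 ≤ ρ) (h1 : ρ < 1) :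
    Summable (fun n : ℕ => (n:ℝ) * bc t n * ρ ^ (n - 1)) := by
  apply summable_of_ratio_norm_eventually_le (r := (1 + ρ) / 2) (by linarith)
  filter_upwards [ratio_eventually t ρ ht h0 h1, eventually_ge_atTop 1] with n hn hn1
  have hb := bc_pos ht n
  have hb1 := bc_pos ht (n + 1)
  have hρn : (0:ℝ) ≤ ρ ^ (n - 1) := pow_nonneg h0 _
  rw [Real.norm_of_nonneg (by positivity), Real.norm_of_nonneg (by positivity)]
  have hpow : ρ ^ (n + 1 - 1) = ρ ^ (n - 1) * ρ := by
    obtain ⟨m, rfl⟩ := Nat.exists_eq_add_of_le hn1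
    simp only [Nat.add_sub_cancel_left, add_comm 1 m, Nat.add_sub_cancel]
    rw [pow_succ]
  push_cast
  calc ((n:ℝ) + 1) * bc t (n + 1) * ρ ^ (n + 1 - 1)
      = (bc t n * ρ ^ (n - 1)) * (ρ * (t + n)) := by rw [bc_rec, hpow]; ring
    _ ≤ (bc t n * ρ ^ (n - 1)) * ((1 + ρ) / 2 * n) := by
        apply mul_le_mul_of_nonneg_left hn (by positivity)
    _ = (1 + ρ) / 2 * ((n:ℝ) * bc t n * ρ ^ (n - 1)) := by ring

lemma summable_bc_nmul {t : ℝ} (ht : 0 < t) {ρ : ℝ} (h0 : 0 ≤ ρ) (h1 : ρ < 1) :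
    Summable (fun n : ℕ => (n:ℝ) * bc t n * ρ ^ n) := by
  apply ((summable_bc_deriv ht h0 h1).mul_left ρ).congr
  intro n
  cases n with
  | zero => simp
  | succ m => simp only [Nat.add_sub_cancel]; rw [pow_succ]; push_cast; ring

lemma bc_sq_le {t : ℝ} (ht : 0 < t) (n : ℕ) : bc t n ^ 2 ≤ bc (t ^ 2) n := by
  rw [bc, bc, ← Finset.prod_pow]
  apply Finset.prod_le_prod
  · intro k _
    have hk : (0:ℝ) ≤ (k:ℝ) := Nat.cast_nonneg k
    positivity
  · intro k _
    have hk : (0:ℝ) ≤ (k:ℝ) := Nat.cast_nonneg k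
    rw [div_pow, div_le_div_iff₀ (by positivity) (by positivity)]
    nlinarith [mul_nonneg hk (sq_nonneg (t - 1)), mul_nonneg (mul_nonneg hk (sq_nonneg (t - 1))) hk]

/-- The binomial series sum `∑ bc t n z^n`. -/
def bf (t : ℝ) (z : ℂ) : ℂ := ∑' n : ℕ, (bc t n : ℂ) * z ^ n

/-- Its termwise derivative. -/
def bd (t : ℝ) (z : ℂ) : ℂ := ∑' n : ℕ, (bc t n : ℂ) * ((n:ℂ) * z ^ (n - 1))

lemma norm_bc_mul_pow (t : ℝ) (ht : 0 < t) (z : ℂ) (n : ℕ) :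
    ‖(bc t n : ℂ) * z ^ n‖ = bc t n * ‖z‖ ^ n := by
  rw [norm_mul, norm_pow, Complex.norm_real, Real.norm_of_nonneg (bc_pos ht n).le]

lemma summable_bf {t : ℝ} (ht : 0 < t) {z : ℂ} (hz : ‖z‖ < 1) :
    Summable (fun n : ℕ => (bc t n : ℂ) * z ^ n) := by
  apply Summable.of_norm
  exact (summable_bc ht (norm_nonneg z) hz).congr
    (fun n => (norm_bc_mul_pow t ht z n).symm)

lemma summable_bd {t : ℝ} (ht : 0 < t) {z : ℂ} (hz : ‖z‖ < 1) :
    Summable (fun n : ℕ => (bc t n : ℂ) * ((n:ℂ) * z ^ (n - 1))) := by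
  apply Summable.of_norm
  apply (summable_bc_deriv ht (norm_nonneg z) hz).congr
  intro n
  rw [norm_mul, norm_mul, norm_pow, Complex.norm_real, Complex.norm_natCast,
    Real.norm_of_nonneg (bc_pos ht n).le]
  ring

lemma summable_bf_nmul {t : ℝ} (ht : 0 < t) {z : ℂ} (hz : ‖z‖ < 1) :
    Summable (fun n : ℕ => (n:ℂ) * (bc t n : ℂ) * z ^ n) := by
  apply Summable.of_norm
  apply (summable_bc_nmul ht (norm_nonneg z) hz).congr
  intro n
  rw [norm_mul, norm_mul, norm_pow, Complex.norm_real, Complex.norm_natCast,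
    Real.norm_of_nonneg (bc_pos ht n).le]

lemma hasDerivAt_bf {t : ℝ} (ht : 0 < t) {z : ℂ} (hz : ‖z‖ < 1) :
    HasDerivAt (bf t) (bd t z) z := by
  set ρ : ℝ := (1 + ‖z‖) / 2 with hρdef
  have h0 : 0 ≤ ρ := by positivity
  have h1 : ρ < 1 := by rw [hρdef]; linarith
  have hzρ : ‖z‖ < ρ := by rw [hρdef]; linarith
  have hmem : z ∈ Metric.ball (0:ℂ) ρ := by
    simpa [Metric.mem_ball, dist_zero_right] using hzρ
  have h0mem : (0:ℂ) ∈ Metric.ball (0:ℂ) ρ := by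
    simp [Metric.mem_ball]
    linarith [norm_nonneg z]
  exact hasDerivAt_tsum_of_isPreconnected
    (u := fun n : ℕ => (n:ℝ) * bc t n * ρ ^ (n - 1))
    (g := fun n y => (bc t n : ℂ) * y ^ n)
    (g' := fun n y => (bc t n : ℂ) * ((n:ℂ) * y ^ (n - 1)))
    (summable_bc_deriv ht h0 h1) Metric.isOpen_ball
    (convex_ball (0:ℂ) ρ).isPreconnected
    (fun n y _ => (hasDerivAt_pow n y).const_mul _)
    (fun n y hy => by
      have hyρ : ‖y‖ ≤ ρ := by
        simp only [Metric.mem_ball, dist_zero_right] at hy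
        exact hy.le
      rw [norm_mul, norm_mul, norm_pow, Complex.norm_real, Complex.norm_natCast,
        Real.norm_of_nonneg (bc_pos ht n).le]
      calc bc t n * ((n:ℝ) * ‖y‖ ^ (n - 1))
          ≤ bc t n * ((n:ℝ) * ρ ^ (n - 1)) := by
            apply mul_le_mul_of_nonneg_left _ (bc_pos ht n).le
            exact mul_le_mul_of_nonneg_left
              (pow_le_pow_left₀ (norm_nonneg y) hyρ _) (Nat.cast_nonneg n)
        _ = (n:ℝ) * bc t n * ρ ^ (n - 1) := by ring)
    h0mem
    (by
      apply summable_of_ne_finset_zero (s := {0})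
      intro n hn
      simp only [Finset.mem_singleton] at hn
      simp [zero_pow hn])
    hmem

lemma bf_ode {t : ℝ} (ht : 0 < t) {z : ℂ} (hz : ‖z‖ < 1) :
    (1 - z) * bd t z = (t : ℂ) * bf t z := by
  have S1 : Summable (fun n : ℕ => (bc t n : ℂ) * ((n:ℂ) * z ^ (n - 1))) := summable_bd ht hz
  have Sf : Summable (fun n : ℕ => (bc t n : ℂ) * z ^ n) := summable_bf ht hz
  have SB : Summable (fun n : ℕ => (n:ℂ) * (bc t n : ℂ) * z ^ n) := summable_bf_nmul ht hz
  have SA : Summable (fun n : ℕ => ((t:ℂ) + n) * (bc t n : ℂ) * z ^ n) := by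
    apply ((Sf.mul_left (t:ℂ)).add SB).congr
    intro n; ring
  -- bd = A where A n = (t+n) * bc n * z^n
  have hbd : bd t z = ∑' n : ℕ, ((t:ℂ) + n) * (bc t n : ℂ) * z ^ n := by
    rw [bd, S1.tsum_eq_zero_add]
    simp only [Nat.cast_zero, Nat.add_sub_cancel, zero_mul, mul_zero, zero_add]
    apply tsum_congr
    intro n
    have hrec : ((n:ℂ) + 1) * (bc t (n + 1) : ℂ) = ((t:ℂ) + n) * (bc t n : ℂ) := by
      exact_mod_cast congrArg (fun x : ℝ => (x : ℂ)) (bc_rec t n)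
    push_cast
    calc (bc t (n+1) : ℂ) * (((n:ℂ) + 1) * z ^ n)
        = (((n:ℂ) + 1) * (bc t (n + 1) : ℂ)) * z ^ n := by ring
      _ = ((t:ℂ) + n) * (bc t n : ℂ) * z ^ n := by rw [hrec]
  have hzbd : z * bd t z = ∑' n : ℕ, (n:ℂ) * (bc t n : ℂ) * z ^ n := by
    rw [bd, ← tsum_mul_left]
    apply tsum_congr
    intro n
    cases n with
    | zero => simp
    | succ m =>
      simp only [Nat.add_sub_cancel]
      rw [pow_succ]
      push_cast
      ring
  calc (1 - z) * bd t z = bd t z - z * bd t z := by ring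
    _ = (∑' n : ℕ, ((t:ℂ) + n) * (bc t n : ℂ) * z ^ n)
        - ∑' n : ℕ, (n:ℂ) * (bc t n : ℂ) * z ^ n := by rw [hzbd, hbd]
    _ = ∑' n : ℕ, (((t:ℂ) + n) * (bc t n : ℂ) * z ^ n - (n:ℂ) * (bc t n : ℂ) * z ^ n) :=
        (SA.tsum_sub SB).symm
    _ = ∑' n : ℕ, (t:ℂ) * ((bc t n : ℂ) * z ^ n) := by
        apply tsum_congr; intro n; ring
    _ = (t:ℂ) * bf t z := tsum_mul_left

lemma bf_zero (t : ℝ) : bf t 0 = 1 := by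
  rw [bf, tsum_eq_single 0]
  · simp [bc_zero]
  · intro n hn
    simp [zero_pow hn]

lemma bf_mul_cpow {t : ℝ} (ht : 0 < t) {z : ℂ} (hz : ‖z‖ < 1) :
    bf t z * (1 - z) ^ (t : ℂ) = 1 := by
  have key : ∀ y ∈ Metric.ball (0:ℂ) 1,
      HasDerivAt (fun x => bf t x * (1 - x) ^ (t:ℂ)) 0 y := by
    intro y hy
    have hy1 : ‖y‖ < 1 := by simpa [Metric.mem_ball, dist_zero_right] using hy
    have hre : 0 < (1 - y).re := by
      have h := Complex.abs_re_le_norm y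
      have : |y.re| < 1 := lt_of_le_of_lt h hy1
      have := abs_lt.mp this
      simp [Complex.sub_re, Complex.one_re]
      linarith [this.2]
    have hne : (1:ℂ) - y ≠ 0 := by
      intro h
      rw [h] at hre
      simp at hre
    have h1 : HasDerivAt (bf t) (bd t y) y := hasDerivAt_bf ht hy1
    have hin : HasDerivAt (fun x : ℂ => 1 - x) (-1) y := (hasDerivAt_id y).const_sub 1
    have h2 : HasDerivAt (fun x : ℂ => (1 - x) ^ (t:ℂ))
        ((t:ℂ) * (1 - y) ^ ((t:ℂ) - 1) * (-1)) y :=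
      hin.cpow_const (Complex.mem_slitPlane_iff.mpr (Or.inl hre))
    have hprod := h1.mul h2
    refine hprod.congr_deriv (Eq.symm ?_)
    have hsplit : (1 - y) ^ (t:ℂ) = (1 - y) ^ ((t:ℂ) - 1) * (1 - y) := by
      have h := Complex.cpow_add ((t:ℂ) - 1) 1 hne
      rw [Complex.cpow_one, sub_add_cancel] at h
      exact h
    rw [hsplit]
    have hode := bf_ode ht hy1
    linear_combination (-(1 - y) ^ ((t:ℂ) - 1)) * hode
  have hdiff : DifferentiableOn ℂ (fun x => bf t x * (1 - x) ^ (t:ℂ)) (Metric.ball (0:ℂ) 1) :=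
    fun y hy => ((key y hy).differentiableAt).differentiableWithinAt
  have hzero : ∀ y ∈ Metric.ball (0:ℂ) 1,
      fderivWithin ℂ (fun x => bf t x * (1 - x) ^ (t:ℂ)) (Metric.ball (0:ℂ) 1) y = 0 := by
    intro y hy
    rw [fderivWithin_of_isOpen Metric.isOpen_ball hy, (key y hy).hasFDerivAt.fderiv]
    ext
    simp
  have h0mem : (0:ℂ) ∈ Metric.ball (0:ℂ) 1 := by simp
  have hzmem : z ∈ Metric.ball (0:ℂ) 1 := by
    simpa [Metric.mem_ball, dist_zero_right] using hz
  have := (convex_ball (0:ℂ) 1).is_const_of_fderivWithin_eq_zero hdiff hzero hzmem h0mem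
  rw [this, bf_zero]
  simp

lemma abs_bf {t : ℝ} (ht : 0 < t) {z : ℂ} (hz : ‖z‖ < 1) :
    ‖bf t z‖ = ‖1 - z‖ ^ (-t) := by
  have hne : (1:ℂ) - z ≠ 0 := by
    intro h
    have : (1:ℂ) = z := by linear_combination h
    rw [← this] at hz
    simp at hz
  have habs : 0 < ‖1 - z‖ := by
    simpa [norm_pos_iff] using hne
  have h := congrArg norm (bf_mul_cpow ht hz)
  rw [norm_mul, Complex.norm_cpow_real, norm_one] at h
  rw [Real.rpow_neg habs.le]
  exact eq_inv_of_mul_eq_one_left h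

lemma tsum_bc_eq {t : ℝ} (ht : 0 < t) {x : ℝ} (h0 : 0 ≤ x) (h1 : x < 1) :
    ∑' n : ℕ, bc t n * x ^ n = (1 - x) ^ (-t) := by
  have hz : ‖(x:ℂ)‖ < 1 := by
    rw [Complex.norm_real, Real.norm_of_nonneg h0]
    exact h1
  have key := bf_mul_cpow ht hz
  have h1x : (0:ℝ) < 1 - x := by linarith
  have hcast : bf t (x:ℂ) = ((∑' n : ℕ, bc t n * x ^ n : ℝ) : ℂ) := by
    rw [Complex.ofReal_tsum, bf]
    apply tsum_congr
    intro n
    push_cast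
    ring
  rw [hcast, show ((1:ℂ) - (x:ℂ)) = ((1 - x : ℝ) : ℂ) by push_cast; ring,
    ← Complex.ofReal_cpow h1x.le, ← Complex.ofReal_mul, show (1:ℂ) = ((1:ℝ):ℂ) by norm_num] at key
  have hreal := Complex.ofReal_injective key
  rw [Real.rpow_neg h1x.le]
  exact eq_inv_of_mul_eq_one_left hreal
lemma abs_one_sub_pos {z : ℂ} (hz : ‖z‖ < 1) : 0 < ‖1 - z‖ := by
  have h := norm_sub_norm_le (1:ℂ) z
  rw [norm_one] at h
  linarith

lemma norm_exp_theta (θ : ℝ) : ‖Complex.exp ((θ:ℂ) * Complex.I)‖ = 1 := by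
  rw [Complex.norm_exp]
  simp

lemma integral_parseval {p : ℝ} (hp0 : 0 < p) {a : ℂ} (ha : ‖a‖ < 1) :
    ∫ θ in (0:ℝ)..(2 * Real.pi),
        ‖1 - a * Complex.exp ((θ : ℂ) * Complex.I)‖ ^ (-p)
      = 2 * Real.pi * ∑' n : ℕ, bc (p / 2) n ^ 2 * (‖a‖ ^ 2) ^ n := by
  have h2π : (0:ℝ) < 2 * Real.pi := by positivity
  set t : ℝ := p / 2 with hteq
  have ht : 0 < t := by rw [hteq]; positivity
  set r : ℝ := ‖a‖ with hrdef
  have hr0 : 0 ≤ r := norm_nonneg a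
  have hr1 : r < 1 := ha
  have hznorm : ∀ θ : ℝ, ‖a * Complex.exp ((θ:ℂ) * Complex.I)‖ = r := by
    intro θ
    rw [norm_mul, norm_exp_theta, mul_one]
  -- the double-indexed family
  set F : ℕ × ℕ → ℝ → ℂ := fun q θ =>
    ((bc t q.1 : ℂ) * (a * Complex.exp ((θ:ℂ) * Complex.I)) ^ q.1) *
      (starRingEnd ℂ) ((bc t q.2 : ℂ) * (a * Complex.exp ((θ:ℂ) * Complex.I)) ^ q.2) with hFdef
  have hFnorm : ∀ (q : ℕ × ℕ) (θ : ℝ),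
      ‖F q θ‖ = (bc t q.1 * r ^ q.1) * (bc t q.2 * r ^ q.2) := by
    intro q θ
    rw [hFdef]
    simp only
    rw [norm_mul, starRingEnd_apply, norm_star, norm_bc_mul_pow t ht _ q.1,
      norm_bc_mul_pow t ht _ q.2, hznorm θ]
  -- pointwise expansion
  have hA : ∀ θ : ℝ,
      ((‖1 - a * Complex.exp ((θ:ℂ) * Complex.I)‖ ^ (-p) : ℝ) : ℂ)
        = ∑' q : ℕ × ℕ, F q θ := by
    intro θ
    set z : ℂ := a * Complex.exp ((θ:ℂ) * Complex.I) with hzdef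
    have hz1 : ‖z‖ < 1 := by rw [hzdef, hznorm θ]; exact hr1
    have habs : 0 < ‖1 - z‖ := abs_one_sub_pos hz1
    have h1 : ‖bf t z‖ ^ (2:ℕ) = ‖1 - z‖ ^ (-p) := by
      rw [abs_bf ht hz1, ← Real.rpow_natCast (‖1 - z‖ ^ (-t)) 2,
        ← Real.rpow_mul habs.le]
      congr 1
      rw [hteq]
      push_cast
      ring
    have hterm : Summable fun n : ℕ => ‖(bc t n : ℂ) * z ^ n‖ := by
      apply (summable_bc ht hr0 hr1).congr
      intro n
      rw [norm_bc_mul_pow t ht, hzdef, hznorm θ]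
    have hstarterm : Summable fun n : ℕ => ‖star ((bc t n : ℂ) * z ^ n)‖ := by
      apply hterm.congr
      intro n
      rw [norm_star]
    calc ((‖1 - z‖ ^ (-p) : ℝ) : ℂ)
        = ((‖bf t z‖ ^ (2:ℕ) : ℝ) : ℂ) := by rw [h1]
      _ = ((Complex.normSq (bf t z) : ℝ) : ℂ) := by rw [Complex.sq_norm]
      _ = bf t z * (starRingEnd ℂ) (bf t z) := (Complex.mul_conj _).symm
      _ = (∑' n : ℕ, (bc t n : ℂ) * z ^ n) * ∑' m : ℕ, star ((bc t m : ℂ) * z ^ m) := by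
          rw [bf, starRingEnd_apply, tsum_star]
      _ = ∑' q : ℕ × ℕ, ((bc t q.1 : ℂ) * z ^ q.1) * star ((bc t q.2 : ℂ) * z ^ q.2) :=
          tsum_mul_tsum_of_summable_norm hterm hstarterm
      _ = ∑' q : ℕ × ℕ, F q θ := by
          apply tsum_congr
          intro q
          simp only [hFdef, starRingEnd_apply, hzdef]
  -- continuity / measurability
  have hcont : ∀ q : ℕ × ℕ, Continuous (F q) := by
    intro q
    rw [hFdef]
    simp only [starRingEnd_apply]
    fun_prop
  -- summability of the constant bounds
  have hprodsum : Summable (fun q : ℕ × ℕ => (bc t q.1 * r ^ q.1) * (bc t q.2 * r ^ q.2)) := by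
    apply Summable.mul_of_nonneg (summable_bc ht hr0 hr1) (summable_bc ht hr0 hr1)
    · intro n
      have := bc_pos ht n
      positivity
    · intro n
      have := bc_pos ht n
      positivity
  -- the lintegral bound
  have hbound : ∑' q : ℕ × ℕ,
      ∫⁻ θ in Set.Ioc (0:ℝ) (2 * Real.pi), ‖F q θ‖₊ ∂volume ≠ ⊤ := by
    have heval : ∀ q : ℕ × ℕ,
        ∫⁻ θ in Set.Ioc (0:ℝ) (2 * Real.pi), ‖F q θ‖₊ ∂volume
          = (‖(bc t q.1 * r ^ q.1) * (bc t q.2 * r ^ q.2)‖₊ : ℝ≥0∞) *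
              ENNReal.ofReal (2 * Real.pi) := by
      intro q
      have hcst : ∀ θ : ℝ, (‖F q θ‖₊ : ℝ≥0∞)
          = (‖(bc t q.1 * r ^ q.1) * (bc t q.2 * r ^ q.2)‖₊ : ℝ≥0∞) := by
        intro θ
        congr 1
        apply NNReal.coe_injective
        rw [coe_nnnorm, coe_nnnorm, hFnorm q θ]
        have h1 := bc_pos ht q.1
        have h2 := bc_pos ht q.2
        rw [Real.norm_of_nonneg (by positivity)]
      calc ∫⁻ θ in Set.Ioc (0:ℝ) (2 * Real.pi), ‖F q θ‖₊ ∂volume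
          = ∫⁻ _ in Set.Ioc (0:ℝ) (2 * Real.pi),
              (‖(bc t q.1 * r ^ q.1) * (bc t q.2 * r ^ q.2)‖₊ : ℝ≥0∞) ∂volume :=
            lintegral_congr hcst
        _ = (‖(bc t q.1 * r ^ q.1) * (bc t q.2 * r ^ q.2)‖₊ : ℝ≥0∞) *
              ENNReal.ofReal (2 * Real.pi) := by
            rw [setLIntegral_const, Real.volume_Ioc, sub_zero]
    rw [tsum_congr heval, ENNReal.tsum_mul_right]
    apply ENNReal.mul_ne_top
    · apply ENNReal.tsum_coe_ne_top_iff_summable.mpr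
      rw [← NNReal.summable_coe]
      simp only [coe_nnnorm]
      apply hprodsum.congr
      intro q
      have h1 := bc_pos ht q.1
      have h2 := bc_pos ht q.2
      rw [Real.norm_of_nonneg (by positivity)]
    · exact ENNReal.ofReal_ne_top
  -- exponential form of F
  have hF : ∀ (n m : ℕ) (θ : ℝ), F (n, m) θ
      = ((bc t n : ℂ) * (bc t m : ℂ) * a ^ n * ((starRingEnd ℂ) a) ^ m) *
          Complex.exp ((((n:ℂ) - (m:ℂ)) * Complex.I) * (θ:ℂ)) := by
    intro n m θ
    rw [hFdef]
    simp only
    rw [map_mul, map_pow, map_mul, Complex.conj_ofReal]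
    rw [← Complex.exp_conj, map_mul, Complex.conj_ofReal, Complex.conj_I]
    rw [mul_pow, mul_pow, ← Complex.exp_nat_mul, ← Complex.exp_nat_mul]
    have hexp : Complex.exp ((n:ℂ) * ((θ:ℂ) * Complex.I)) *
        Complex.exp ((m:ℂ) * ((θ:ℂ) * -Complex.I))
          = Complex.exp ((((n:ℂ) - (m:ℂ)) * Complex.I) * (θ:ℂ)) := by
      rw [← Complex.exp_add]
      congr 1
      ring
    linear_combination ((bc t n : ℂ) * (bc t m : ℂ) * a ^ n * ((starRingEnd ℂ) a) ^ m) * hexp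
  -- termwise integral
  have hint : ∀ q : ℕ × ℕ, (∫ θ in (0:ℝ)..(2 * Real.pi), F q θ)
      = if q.1 = q.2
        then ((bc t q.1 : ℂ) * (bc t q.2 : ℂ) * a ^ q.1 * ((starRingEnd ℂ) a) ^ q.2) *
          ((2 * Real.pi : ℝ) : ℂ)
        else 0 := by
    rintro ⟨n, m⟩
    simp only
    rw [intervalIntegral.integral_congr (g := fun θ : ℝ =>
      ((bc t n : ℂ) * (bc t m : ℂ) * a ^ n * ((starRingEnd ℂ) a) ^ m) *
        Complex.exp ((((n:ℂ) - (m:ℂ)) * Complex.I) * (θ:ℂ)))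
      (fun θ _ => hF n m θ)]
    rw [intervalIntegral.integral_const_mul]
    by_cases h : n = m
    · subst h
      rw [if_pos rfl]
      simp only [sub_self, zero_mul]
      simp [Complex.exp_zero]
    · rw [if_neg h]
      have hc : ((n:ℂ) - (m:ℂ)) * Complex.I ≠ 0 := by
        apply mul_ne_zero _ Complex.I_ne_zero
        intro hh
        apply h
        have : (n:ℂ) = (m:ℂ) := by linear_combination hh
        exact_mod_cast this
      rw [integral_exp_mul_complex hc]
      have hper : Complex.exp ((((n:ℂ) - (m:ℂ)) * Complex.I) * ((2 * Real.pi : ℝ) : ℂ)) = 1 := by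
        have hk := Complex.exp_int_mul_two_pi_mul_I ((n:ℤ) - (m:ℤ))
        rw [← hk]
        congr 1
        push_cast
        ring
      rw [hper]
      simp
  -- summability of the diagonal sum
  have hdiagsum : Summable (fun q : ℕ × ℕ =>
      if q.1 = q.2
      then ((bc t q.1 : ℂ) * (bc t q.2 : ℂ) * a ^ q.1 * ((starRingEnd ℂ) a) ^ q.2) *
        ((2 * Real.pi : ℝ) : ℂ)
      else 0) := by
    apply Summable.of_norm
    refine Summable.of_nonneg_of_le (fun q => norm_nonneg _) (fun q => ?_)
      (hprodsum.mul_right (2 * Real.pi))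
    by_cases h : q.1 = q.2
    · rw [if_pos h, norm_mul, norm_mul, norm_mul, norm_mul]
      have h1 := bc_pos ht q.1
      have h2 := bc_pos ht q.2
      rw [Complex.norm_real, Complex.norm_real, Complex.norm_real, norm_pow, norm_pow,
        starRingEnd_apply, norm_star,
        Real.norm_of_nonneg h1.le, Real.norm_of_nonneg h2.le,
        Real.norm_of_nonneg (le_of_lt h2π), ← hrdef]
      apply le_of_eq
      ring
    · rw [if_neg h, norm_zero]
      have h1 := bc_pos ht q.1
      have h2 := bc_pos ht q.2
      positivity
  -- assemble
  have hmain : ((∫ θ in (0:ℝ)..(2 * Real.pi),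
      ‖1 - a * Complex.exp ((θ:ℂ) * Complex.I)‖ ^ (-p) : ℝ) : ℂ)
      = ((2 * Real.pi * ∑' n : ℕ, bc t n ^ 2 * (r ^ 2) ^ n : ℝ) : ℂ) := by
    rw [← intervalIntegral.integral_ofReal]
    calc ∫ θ in (0:ℝ)..(2 * Real.pi),
          ((‖1 - a * Complex.exp ((θ:ℂ) * Complex.I)‖ ^ (-p) : ℝ) : ℂ)
        = ∫ θ in (0:ℝ)..(2 * Real.pi), ∑' q : ℕ × ℕ, F q θ :=
          intervalIntegral.integral_congr (fun θ _ => hA θ)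
      _ = ∫ θ in Set.Ioc (0:ℝ) (2 * Real.pi), ∑' q : ℕ × ℕ, F q θ ∂volume :=
          intervalIntegral.integral_of_le h2π.le
      _ = ∑' q : ℕ × ℕ, ∫ θ in Set.Ioc (0:ℝ) (2 * Real.pi), F q θ ∂volume :=
          MeasureTheory.integral_tsum
            (fun q => ((hcont q).aestronglyMeasurable)) hbound
      _ = ∑' q : ℕ × ℕ, ∫ θ in (0:ℝ)..(2 * Real.pi), F q θ := by
          apply tsum_congr
          intro q
          rw [intervalIntegral.integral_of_le h2π.le]
      _ = ∑' q : ℕ × ℕ,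
          if q.1 = q.2
          then ((bc t q.1 : ℂ) * (bc t q.2 : ℂ) * a ^ q.1 * ((starRingEnd ℂ) a) ^ q.2) *
            ((2 * Real.pi : ℝ) : ℂ)
          else 0 := tsum_congr hint
      _ = ∑' n : ℕ, ((bc t n ^ 2 * (r ^ 2) ^ n * (2 * Real.pi) : ℝ) : ℂ) := by
          rw [hdiagsum.tsum_prod' (fun n => by
            apply summable_of_ne_finset_zero (s := {n})
            intro m hm
            simp only [Finset.mem_singleton] at hm
            exact if_neg (fun hnm => hm hnm.symm))]
          apply tsum_congr
          intro n
          rw [tsum_eq_single n (fun m hm => if_neg (fun hnm => hm hnm.symm))]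
          rw [if_pos rfl]
          have haconj : a ^ n * ((starRingEnd ℂ) a) ^ n = ((r ^ 2 : ℝ) : ℂ) ^ n := by
            rw [← mul_pow, Complex.mul_conj]
            norm_cast
            rw [hrdef]
            exact congrArg (· ^ n) (Complex.sq_norm a).symm
          calc (bc t n : ℂ) * (bc t n : ℂ) * a ^ n * ((starRingEnd ℂ) a) ^ n *
                ((2 * Real.pi : ℝ) : ℂ)
              = (bc t n : ℂ) * (bc t n : ℂ) * (a ^ n * ((starRingEnd ℂ) a) ^ n) *
                ((2 * Real.pi : ℝ) : ℂ) := by ring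
            _ = (bc t n : ℂ) ^ 2 * ((r ^ 2 : ℝ) : ℂ) ^ n * ((2 * Real.pi : ℝ) : ℂ) := by
                rw [haconj]; ring
            _ = ((bc t n ^ 2 * (r ^ 2) ^ n * (2 * Real.pi) : ℝ) : ℂ) := by push_cast; ring
      _ = ((2 * Real.pi * ∑' n : ℕ, bc t n ^ 2 * (r ^ 2) ^ n : ℝ) : ℂ) := by
          rw [← Complex.ofReal_tsum]
          congr 1
          rw [tsum_mul_right]
          ring
  exact Complex.ofReal_injective hmain
end SzegoAux

/-- For `s ≥ 1`, `0 < p ≤ 4/s` and `|w| < 1`: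
`(1/2π) ∫₀^{2π} |1 - w̄ e^{iθ}|^{-p} dθ ≤ (1 - |w|²)^{-p/s}`, i.e. the Szegő kernel satisfies
`‖k_w‖_p ≤ (1 - |w|²)^{-1/s}`. -/
theorem szego_kernel_pth_mean_bound
    (s : ℝ) (hs : 1 ≤ s) (p : ℝ) (hp0 : 0 < p) (hp : p ≤ 4 / s)
    (w : ℂ) (hw : ‖w‖ < 1) :
    (2 * Real.pi)⁻¹ * ∫ θ in (0:ℝ)..(2 * Real.pi),
        (‖1 - (starRingEnd ℂ) w * Complex.exp ((θ : ℂ) * Complex.I)‖) ^ (-p)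
      ≤ (1 - ‖w‖ ^ 2) ^ (-(p / s)) := by
  have h2π : (0:ℝ) < 2 * Real.pi := by positivity
  have ht : 0 < p / 2 := by positivity
  have haabs : ‖(starRingEnd ℂ) w‖ < 1 := by
    rwa [Complex.norm_conj]
  have hkey := SzegoAux.integral_parseval hp0 haabs
  rw [hkey, ← mul_assoc, inv_mul_cancel₀ (ne_of_gt h2π), one_mul, Complex.norm_conj]
  -- now bound the sum
  have hx0 : (0:ℝ) ≤ ‖w‖ ^ 2 := by positivity
  have hx1 : ‖w‖ ^ 2 < 1 :=
    pow_lt_one₀ (norm_nonneg w) hw (two_ne_zero)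
  have ht2 : 0 < (p / 2) ^ 2 := by positivity
  have hright : Summable (fun n : ℕ => SzegoAux.bc ((p / 2) ^ 2) n * (‖w‖ ^ 2) ^ n) :=
    SzegoAux.summable_bc ht2 hx0 hx1
  have hterm : ∀ n : ℕ, SzegoAux.bc (p / 2) n ^ 2 * (‖w‖ ^ 2) ^ n
      ≤ SzegoAux.bc ((p / 2) ^ 2) n * (‖w‖ ^ 2) ^ n := fun n =>
    mul_le_mul_of_nonneg_right (SzegoAux.bc_sq_le ht n) (pow_nonneg hx0 n)
  have hleft : Summable (fun n : ℕ => SzegoAux.bc (p / 2) n ^ 2 * (‖w‖ ^ 2) ^ n) := by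
    apply Summable.of_nonneg_of_le (fun n => by positivity) hterm hright
  have hsum_le := Summable.tsum_le_tsum hterm hleft hright
  rw [SzegoAux.tsum_bc_eq ht2 hx0 hx1] at hsum_le
  refine le_trans hsum_le ?_
  apply Real.rpow_le_rpow_of_exponent_ge (by linarith) (by linarith)
  -- -(p/s) ≤ -((p/2)^2)
  have hs0 : 0 < s := lt_of_lt_of_le one_pos hs
  have hps : p * s ≤ 4 := by
    rw [le_div_iff₀ hs0] at hp
    linarith
  have hq : (p / 2) ^ 2 ≤ p / s := by
    rw [div_pow, div_le_div_iff₀ (by norm_num) hs0]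
    nlinarith [mul_le_mul_of_nonneg_left hps hp0.le]
  linarith
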